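/- If θ ∈ (0,1) is irrational with continued fraction expansion [2n, a₂, a₃, ...] where n ≥ 1, and δ = 1 - 2nθ, then δ/2 + a₂δ < 1/2 - (n-1)θ < δ/2 + (a₂+1)δ. -/

import Mathlib

/-- If `θ = [2n, a₂, ...]` is irrational with `n ≥ 1` and `δ = 1 - 2nθ`, then
`δ/2 + a₂δ < 1/2 - (n-1)θ < δ/2 + (a₂+1)δ`. -/
theorem stmt9 (θ : ℝ) (hθ : Irrational θ) (h0 : 0 < θ) (h1 : θ < 1)
    (n a2 : ℕ) (hn : 1 ≤ n) (ha2pos : 1 ≤ a2)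
    (ha1 : ⌊1/θ⌋ = 2 * (n : ℤ)) (ha2 : ⌊1 / Int.fract (1/θ)⌋ = (a2 : ℤ))
    (δ : ℝ) (hδ : δ = 1 - 2*(n:ℝ)*θ) :
    δ/2 + (a2:ℝ)*δ < 1/2 - ((n:ℝ) - 1)*θ ∧
      1/2 - ((n:ℝ) - 1)*θ < δ/2 + ((a2:ℝ)+1)*δ := by
  have hθne : θ ≠ 0 := ne_of_gt h0
  have hinv : Irrational (1/θ) := by rw [one_div]; exact hθ.inv
  have hfl : ((2*(n:ℤ) : ℤ) : ℝ) ≤ 1/θ := ha1 ▸ Int.floor_le _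
  have hlt : ((2*(n:ℤ) : ℤ) : ℝ) < 1/θ :=
    hfl.lt_of_ne (fun h => (hinv.ne_int (2*n)) h.symm)
  have hlt' : 2*(n:ℝ) < 1/θ := by push_cast at hlt; linarith
  have hδpos : 0 < δ := by
    rw [hδ]
    have := (lt_div_iff₀ h0).mp hlt'
    linarith
  have hfract : Int.fract (1/θ) = δ/θ := by
    rw [Int.fract, ha1, hδ]
    push_cast
    field_simp
  have hinvfract : 1 / Int.fract (1/θ) = θ/δ := by
    rw [hfract, one_div_div]
  rw [hinvfract] at ha2
  have hle : ((a2:ℤ) : ℝ) ≤ θ/δ := ha2 ▸ Int.floor_le _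
  have hub : θ/δ < ((a2:ℤ) : ℝ) + 1 := by
    have := Int.lt_floor_add_one (θ/δ)
    rwa [ha2] at this
  have hne : θ/δ ≠ ((a2:ℤ) : ℝ) := by
    intro h
    have hθeq : θ = (a2:ℝ) * δ := by
      field_simp at h
      push_cast at h
      linarith
    rw [hδ] at hθeq
    have hden : (1 + 2*(n:ℝ)*(a2:ℝ)) ≠ 0 := by positivity
    have : θ = (a2:ℝ) / (1 + 2*(n:ℝ)*(a2:ℝ)) := by
      field_simp
      ring_nf
      ring_nf at hθeq
      linarith
    exact hθ ⟨(a2:ℚ) / (1 + 2*(n:ℚ)*(a2:ℚ)), by push_cast; linarith⟩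
  have hstrict : ((a2:ℤ) : ℝ) < θ/δ := hle.lt_of_ne (Ne.symm hne)
  push_cast at hstrict hub
  have h2 : (a2:ℝ) * δ < θ := by
    have := (lt_div_iff₀ hδpos).mp hstrict
    linarith
  have h3 : θ < ((a2:ℝ)+1) * δ := by
    have := (div_lt_iff₀ hδpos).mp hub
    linarith
  constructor <;> rw [hδ] <;> rw [hδ] at h2 h3 <;> push_cast <;> nlinarith [h2, h3]
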